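/- Let R be a commutative Noetherian local ring, I an ideal minimally generated by x1,...,xs,y with x1,...,xs a regular sequence, and J = (x1,...,xs). For n ≥ 2, the map sending w ∈ I^(n-1) ∩ (J*I^(n-1) : y), written w = a*y^(n-1) + b with b ∈ J*I^(n-2), to the class of a, induces a well-defined isomorphism of R-modules (I^(n-1) ∩ (J*I^(n-1) : y))/(J*I^(n-2)) ≅ (J*I^(n-1) : y^n)/(J*I^(n-2) : y^(n-1)). -/

import Mathlib

lemma aux_pow_le {R : Type*} [CommRing R] (I J : Ideal R) (y : R)
    (hI : I = J ⊔ Ideal.span {y}) :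
    ∀ m : ℕ, I ^ (m + 1) ≤ Ideal.span {y ^ (m + 1)} ⊔ J * I ^ m := by
  have hyI : y ∈ I := by rw [hI]; exact Ideal.mem_sup_right (Ideal.mem_span_singleton_self y)
  intro m
  induction m with
  | zero =>
      simp only [zero_add, pow_one, pow_zero, mul_one]
      rw [hI]
      exact le_of_eq (sup_comm _ _)
  | succ m ih =>
      have h2 : I ^ (m + 2) = I * I ^ (m + 1) := by ring
      rw [h2]
      calc I * I ^ (m + 1) ≤ I * (Ideal.span {y ^ (m + 1)} ⊔ J * I ^ m) :=
            Ideal.mul_mono le_rfl ih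
        _ = I * Ideal.span {y ^ (m + 1)} ⊔ I * (J * I ^ m) := by rw [Ideal.mul_sup]
        _ ≤ Ideal.span {y ^ (m + 2)} ⊔ J * I ^ (m + 1) := by
            apply sup_le
            · conv_lhs => rw [hI, Ideal.sup_mul]
              apply sup_le
              · apply le_sup_of_le_right
                apply Ideal.mul_mono le_rfl
                apply Ideal.span_le.2
                simp only [Set.singleton_subset_iff, SetLike.mem_coe]
                exact Ideal.pow_mem_pow hyI _
              · rw [Ideal.span_singleton_mul_span_singleton, ← pow_succ']
                exact le_sup_left
            · apply le_sup_of_le_right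
              rw [show I * (J * I ^ m) = J * (I * I ^ m) by ring, ← pow_succ']

theorem stmt_16' {R : Type*} [CommRing R]
    (I J : Ideal R) (y : R)
    (hI : I = J ⊔ Ideal.span {y})
    (k : ℕ) :
    ∃ e : ((I ^ (k + 1) ⊓ (J * I ^ (k + 1)).colon (Ideal.span {y}) : Ideal R) ⧸
            Submodule.comap
              (I ^ (k + 1) ⊓ (J * I ^ (k + 1)).colon (Ideal.span {y}) : Ideal R).subtype
              (J * I ^ k)) ≃ₗ[R]
          (((J * I ^ (k + 1)).colon (Ideal.span {y ^ (k + 2)}) : Ideal R) ⧸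
            Submodule.comap
              ((J * I ^ (k + 1)).colon (Ideal.span {y ^ (k + 2)}) : Ideal R).subtype
              ((J * I ^ k).colon (Ideal.span {y ^ (k + 1)}))),
      ∀ (w : R) (hw : w ∈ (I ^ (k + 1) ⊓ (J * I ^ (k + 1)).colon (Ideal.span {y}) : Ideal R))
        (a b : R), b ∈ J * I ^ k → w = a * y ^ (k + 1) + b →
        ∃ ha : a ∈ (J * I ^ (k + 1)).colon (Ideal.span {y ^ (k + 2)}),
          e (Submodule.Quotient.mk
              (p := Submodule.comap
                (I ^ (k + 1) ⊓ (J * I ^ (k + 1)).colon (Ideal.span {y}) : Ideal R).subtype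
                (J * I ^ k))
              ⟨w, hw⟩) =
            Submodule.Quotient.mk
              (p := Submodule.comap
                ((J * I ^ (k + 1)).colon (Ideal.span {y ^ (k + 2)}) : Ideal R).subtype
                ((J * I ^ k).colon (Ideal.span {y ^ (k + 1)})))
              ⟨a, ha⟩ := by
  have hyI : y ∈ I := by rw [hI]; exact Ideal.mem_sup_right (Ideal.mem_span_singleton_self y)
  set K1 : Ideal R := I ^ (k + 1) ⊓ (J * I ^ (k + 1)).colon (Ideal.span {y}) with hK1
  set K2 : Ideal R := (J * I ^ (k + 1)).colon (Ideal.span {y ^ (k + 2)}) with hK2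
  set P1 := Submodule.comap K1.subtype (J * I ^ k) with hP1
  set P2 := Submodule.comap K2.subtype ((J * I ^ k).colon (Ideal.span {y ^ (k + 1)})) with hP2
  -- a ∈ K2 → a * y^(k+1) ∈ K1
  have hmul : ∀ a : R, a ∈ K2 → a * y ^ (k + 1) ∈ K1 := by
    intro a ha
    refine Submodule.mem_inf.2 ⟨Ideal.mul_mem_left _ a (Ideal.pow_mem_pow hyI _), ?_⟩
    rw [Ideal.mem_colon_span_singleton]
    have := Ideal.mem_colon_span_singleton.1 ha
    rwa [show a * y ^ (k + 1) * y = a * y ^ (k + 2) by ring]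
  -- key: membership in K2 from a decomposition
  have hdecK2 : ∀ (w a b : R), w ∈ K1 → b ∈ J * I ^ k → w = a * y ^ (k + 1) + b →
      a ∈ K2 := by
    intro w a b hw hb heq
    rw [hK2, Ideal.mem_colon_span_singleton]
    have h1 : w * y ∈ J * I ^ (k + 1) := Ideal.mem_colon_span_singleton.1 hw.2
    have h2 : b * y ∈ J * I ^ (k + 1) := by
      have : b * y ∈ J * I ^ k * Ideal.span {y} :=
        Ideal.mul_mem_mul hb (Ideal.mem_span_singleton_self y)
      have hle : J * I ^ k * Ideal.span {y} ≤ J * I ^ (k + 1) := by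
        rw [mul_assoc]
        apply Ideal.mul_mono le_rfl
        rw [pow_succ]
        exact Ideal.mul_mono le_rfl (Ideal.span_le.2 (by simpa using hyI))
      exact hle this
    have : a * y ^ (k + 2) = w * y - b * y := by rw [heq]; ring
    rw [this]
    exact Submodule.sub_mem _ h1 h2
  -- the linear map f : K2 →ₗ K1 ⧸ P1
  let g : K2 →ₗ[R] K1 := LinearMap.codRestrict K1
    ((LinearMap.mul R R (y ^ (k + 1))).comp K2.subtype)
    (fun a => by
      simp only [LinearMap.coe_comp, Function.comp_apply, Submodule.coe_subtype,
        LinearMap.mul_apply_apply]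
      rw [mul_comm]
      exact hmul a.1 a.2)
  let f : K2 →ₗ[R] (K1 ⧸ P1) := P1.mkQ.comp g
  have hfP2 : P2 ≤ LinearMap.ker f := by
    rintro ⟨a, haK2⟩ haP2
    simp only [LinearMap.mem_ker, f, g, LinearMap.coe_comp, Function.comp_apply,
      Submodule.mkQ_apply]
    rw [Submodule.Quotient.mk_eq_zero]
    simp only [hP1, Submodule.mem_comap, Submodule.coe_subtype,
      LinearMap.codRestrict_apply, LinearMap.coe_comp, Function.comp_apply,
      LinearMap.mul_apply_apply]
    have haP2' : a ∈ (J * I ^ k).colon (Ideal.span {y ^ (k + 1)}) := haP2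
    rw [mul_comm (y ^ (k + 1)) a]
    exact Ideal.mem_colon_span_singleton.1 haP2'
  let fbar : (K2 ⧸ P2) →ₗ[R] (K1 ⧸ P1) := Submodule.liftQ P2 f hfP2
  have hker : LinearMap.ker f ≤ P2 := by
    rintro ⟨a, haK2⟩ haker
    simp only [LinearMap.mem_ker, f, g, LinearMap.coe_comp, Function.comp_apply,
      Submodule.mkQ_apply, Submodule.Quotient.mk_eq_zero, hP1, Submodule.mem_comap,
      Submodule.coe_subtype, LinearMap.codRestrict_apply,
      LinearMap.mul_apply_apply] at haker
    simp only [hP2, Submodule.mem_comap, Submodule.coe_subtype]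
    rw [Ideal.mem_colon_span_singleton, mul_comm a (y ^ (k + 1))]
    exact haker
  have hinj : Function.Injective fbar := by
    rw [← LinearMap.ker_eq_bot]
    exact Submodule.ker_liftQ_eq_bot P2 f hfP2 hker
  have hsurj : Function.Surjective fbar := by
    intro z
    obtain ⟨⟨w, hw⟩, rfl⟩ := Submodule.Quotient.mk_surjective P1 z
    have hwI : w ∈ Ideal.span {y ^ (k + 1)} ⊔ J * I ^ k :=
      aux_pow_le I J y hI k (Submodule.mem_inf.1 hw).1
    obtain ⟨u, hu, b, hb, hub⟩ := Submodule.mem_sup.1 hwI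
    obtain ⟨a, rfl⟩ := Ideal.mem_span_singleton'.1 hu
    have ha : a ∈ K2 := hdecK2 w a b hw hb (by rw [← hub])
    refine ⟨Submodule.Quotient.mk ⟨a, ha⟩, ?_⟩
    show f ⟨a, ha⟩ = _
    simp only [f, g, LinearMap.coe_comp, Function.comp_apply, Submodule.mkQ_apply]
    rw [Submodule.Quotient.eq]
    simp only [hP1, Submodule.mem_comap, Submodule.coe_subtype, Submodule.coe_sub,
      LinearMap.codRestrict_apply, LinearMap.coe_comp, Function.comp_apply,
      LinearMap.mul_apply_apply]
    have hdif : y ^ (k + 1) * a - w = -b := by rw [← hub]; ring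
    rw [hdif]
    exact Submodule.neg_mem _ hb
  refine ⟨(LinearEquiv.ofBijective fbar (show Function.Bijective fbar from ⟨hinj, hsurj⟩)).symm, ?_⟩
  intro w hw a b hb heq
  have ha : a ∈ K2 := hdecK2 w a b hw hb heq
  refine ⟨ha, ?_⟩
  rw [LinearEquiv.symm_apply_eq, LinearEquiv.ofBijective_apply]
  symm
  show f ⟨a, ha⟩ = _
  simp only [f, g, LinearMap.coe_comp, Function.comp_apply, Submodule.mkQ_apply]
  rw [Submodule.Quotient.eq]
  simp only [hP1, Submodule.mem_comap, Submodule.coe_subtype, Submodule.coe_sub,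
    LinearMap.codRestrict_apply, LinearMap.coe_comp, Function.comp_apply,
    LinearMap.mul_apply_apply]
  have h3 : y ^ (k + 1) * a - w = -b := by rw [heq]; ring
  rw [h3]
  exact Submodule.neg_mem _ hb


/-- `R` Noetherian local, `I` minimally generated by `x1,…,xs,y` with
`x1,…,xs` a regular sequence, `J = (x1,…,xs)`. For `n ≥ 2`, sending
`w ∈ I^(n-1) ∩ (J*I^(n-1) : y)`, written `w = a*y^(n-1) + b` with `b ∈ J*I^(n-2)`,
to the class of `a` induces a well-defined `R`-module isomorphism
`(I^(n-1) ∩ (J*I^(n-1) : y))/(J*I^(n-2)) ≅ (J*I^(n-1) : y^n)/(J*I^(n-2) : y^(n-1))`. -/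
theorem stmt_16 {R : Type*} [CommRing R] [IsNoetherianRing R] [IsLocalRing R]
    (I J : Ideal R) (s : ℕ) (x : Fin s → R) (y : R)
    (hJ : J = Ideal.span (Set.range x))
    (hI : I = J ⊔ Ideal.span {y})
    (hminy : y ∉ J)
    (hminx : ∀ i : Fin s, x i ∉ Ideal.span ((x '' {j : Fin s | j ≠ i}) ∪ {y}))
    (hreg : ∀ i : Fin s, ∀ r : R,
      r * x i ∈ Ideal.span (x '' {j : Fin s | j < i}) →
        r ∈ Ideal.span (x '' {j : Fin s | j < i}))
    (hprop : I ≠ ⊤)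
    (n : ℕ) (hn : 2 ≤ n) :
    ∃ e : ((I ^ (n - 1) ⊓ (J * I ^ (n - 1)).colon (Ideal.span {y}) : Ideal R) ⧸
            Submodule.comap
              (I ^ (n - 1) ⊓ (J * I ^ (n - 1)).colon (Ideal.span {y}) : Ideal R).subtype
              (J * I ^ (n - 2))) ≃ₗ[R]
          (((J * I ^ (n - 1)).colon (Ideal.span {y ^ n}) : Ideal R) ⧸
            Submodule.comap
              ((J * I ^ (n - 1)).colon (Ideal.span {y ^ n}) : Ideal R).subtype
              ((J * I ^ (n - 2)).colon (Ideal.span {y ^ (n - 1)}))),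
      ∀ (w : R) (hw : w ∈ (I ^ (n - 1) ⊓ (J * I ^ (n - 1)).colon (Ideal.span {y}) : Ideal R))
        (a b : R), b ∈ J * I ^ (n - 2) → w = a * y ^ (n - 1) + b →
        ∃ ha : a ∈ (J * I ^ (n - 1)).colon (Ideal.span {y ^ n}),
          e (Submodule.Quotient.mk
              (p := Submodule.comap
                (I ^ (n - 1) ⊓ (J * I ^ (n - 1)).colon (Ideal.span {y}) : Ideal R).subtype
                (J * I ^ (n - 2)))
              ⟨w, hw⟩) =
            Submodule.Quotient.mk
              (p := Submodule.comap
                ((J * I ^ (n - 1)).colon (Ideal.span {y ^ n}) : Ideal R).subtype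
                ((J * I ^ (n - 2)).colon (Ideal.span {y ^ (n - 1)})))
              ⟨a, ha⟩ := by
  obtain ⟨k, rfl⟩ : ∃ k, n = k + 2 := ⟨n - 2, by omega⟩
  exact stmt_16' I J y hI k
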